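/- Let $r \geq t \geq 3$ and let $n_1 \geq \cdots \geq n_r$ with $n_r \geq 1$. Then $f(n_1,\ldots,n_r,1,t) \geq f(n_1,\ldots,n_{b-1},1,t) + \left(\sum_{i=b}^r n_i\right)\left(\sum_{i=1}^{t-2} n_i\right)$ for any $t \leq b \leq r$. -/

import Mathlib

/-- The number of edges of the complete multipartite graph obtained by merging
classes of sizes `n 1, …, n r` according to the partition (surjection) `P` into `s` groups. -/
def partitionValue {r s : ℕ} (n : Fin r → ℕ) (P : Fin r → Fin s) : ℕ :=
  ∑ p ∈ Finset.univ.filter (fun p : Fin s × Fin s => p.1 < p.2),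
    (∑ i ∈ Finset.univ.filter (fun i => P i = p.1), n i) *
    (∑ i ∈ Finset.univ.filter (fun i => P i = p.2), n i)

/-- `f(n₁,…,n_r,1,t)`: the maximum over partitions of `[r]` into `t-1` parts. -/
def fval (r t : ℕ) (n : Fin r → ℕ) : ℕ :=
  Finset.sup
    (Finset.univ.filter (fun P : Fin r → Fin (t - 1) => Function.Surjective P))
    (partitionValue n)

lemma filter_low_eq {r m k : ℕ} (hm : m ≤ r) (hk : k ≤ m) :
    Finset.univ.filter (fun i : Fin r => i.val < k) =
    Finset.map (Fin.castLEEmb hm) (Finset.univ.filter (fun i : Fin m => i.val < k)) := by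
  ext j
  simp only [Finset.mem_filter, Finset.mem_univ, true_and, Finset.mem_map, Fin.castLEEmb,
    Fin.castLE, Function.Embedding.coeFn_mk]
  constructor
  · intro hj
    exact ⟨⟨j.val, lt_of_lt_of_le hj hk⟩, hj, rfl⟩
  · rintro ⟨i, hi, rfl⟩
    exact hi

lemma sum_low {r m k : ℕ} (hm : m ≤ r) (hk : k ≤ m) (n : Fin r → ℕ) :
    ∑ i ∈ Finset.univ.filter (fun i : Fin r => i.val < k), n i =
    ∑ i ∈ Finset.univ.filter (fun i : Fin m => i.val < k),
      n ⟨i.val, lt_of_lt_of_le i.isLt hm⟩ := by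
  rw [filter_low_eq hm hk, Finset.sum_map]
  rfl

set_option linter.unreachableTactic false in
set_option linter.unusedTactic false in
/-- Extending a partition of the first `m` classes by throwing all remaining classes into
part `q` gains at least (weight of tail) * (weight of classes not mapped to `q`). -/
lemma key_ext {r m s : ℕ} (hm : m ≤ r) (n : Fin r → ℕ) (P : Fin m → Fin s) (q : Fin s) :
    partitionValue (fun i : Fin m => n ⟨i.val, lt_of_lt_of_le i.isLt hm⟩) P +
      (∑ i ∈ Finset.univ.filter (fun i : Fin r => m ≤ i.val), n i) *
      (∑ i ∈ Finset.univ.filter (fun i : Fin m => P i ≠ q),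
        n ⟨i.val, lt_of_lt_of_le i.isLt hm⟩)
    ≤ partitionValue n (fun i : Fin r => if h : i.val < m then P ⟨i.val, h⟩ else q) := by
  set n' : Fin m → ℕ := fun i => n ⟨i.val, lt_of_lt_of_le i.isLt hm⟩ with hn'
  set Q : Fin r → Fin s := fun i : Fin r => if h : i.val < m then P ⟨i.val, h⟩ else q with hQ
  set W : ℕ := ∑ i ∈ Finset.univ.filter (fun i : Fin r => m ≤ i.val), n i with hW
  set B : Fin s → ℕ := fun p => ∑ i ∈ Finset.univ.filter (fun i : Fin m => P i = p), n' i
    with hB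
  -- fibers of Q
  have hA : ∀ p : Fin s,
      (∑ i ∈ Finset.univ.filter (fun i : Fin r => Q i = p), n i)
        = B p + (if p = q then W else 0) := by
    intro p
    have hsplit := Finset.sum_filter_add_sum_filter_not
      (Finset.univ.filter (fun i : Fin r => Q i = p)) (fun i : Fin r => i.val < m) n
    rw [← hsplit, Finset.filter_filter, Finset.filter_filter]
    congr 1
    · -- low part equals B p
      have h1 : Finset.univ.filter (fun i : Fin r => Q i = p ∧ i.val < m)
          = Finset.map (Fin.castLEEmb hm)
            (Finset.univ.filter (fun i : Fin m => P i = p)) := by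
        ext j
        simp only [Finset.mem_filter, Finset.mem_univ, true_and, Finset.mem_map,
          Fin.castLEEmb, Fin.castLE, Function.Embedding.coeFn_mk, hQ]
        constructor
        · rintro ⟨hjp, hjm⟩
          refine ⟨⟨j.val, hjm⟩, ?_, rfl⟩
          rw [dif_pos hjm] at hjp
          exact hjp
        · rintro ⟨i, hi, rfl⟩
          exact ⟨by rw [dif_pos i.isLt]; simpa using hi, i.isLt⟩
      rw [h1, Finset.sum_map]
      rfl
    · -- high part
      by_cases hp : p = q
      · subst hp
        simp only [if_pos rfl, hW]
        apply Finset.sum_congr _ (fun _ _ => rfl)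
        ext j
        simp only [Finset.mem_filter, Finset.mem_univ, true_and, hQ]
        constructor
        · rintro ⟨_, hjm⟩; omega
        · intro hjm
          exact ⟨by rw [dif_neg (by omega)], by omega⟩
      · rw [if_neg hp]
        apply Finset.sum_eq_zero
        intro j hj
        simp only [Finset.mem_filter, hQ] at hj
        exfalso
        obtain ⟨_, hjp, hjm⟩ := hj
        rw [dif_neg hjm] at hjp
        exact hp hjp.symm
  -- abbreviation
  set T := Finset.univ.filter (fun p : Fin s × Fin s => p.1 < p.2) with hT
  have hPV : partitionValue n Q =
      ∑ p ∈ T, (B p.1 + (if p.1 = q then W else 0)) * (B p.2 + (if p.2 = q then W else 0)) := by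
    unfold partitionValue
    exact Finset.sum_congr rfl (fun p _ => by rw [hA p.1, hA p.2])
  rw [hPV]
  have step1 : ∑ p ∈ T, (B p.1 * B p.2
        + ((if p.1 = q then W else 0) * B p.2 + B p.1 * (if p.2 = q then W else 0)))
      ≤ ∑ p ∈ T, (B p.1 + (if p.1 = q then W else 0)) * (B p.2 + (if p.2 = q then W else 0)) := by
    apply Finset.sum_le_sum
    intro p _
    ring_nf
    nlinarith [Nat.zero_le ((if p.1 = q then W else 0) * (if p.2 = q then W else 0))]
  refine le_trans ?_ step1
  rw [Finset.sum_add_distrib]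
  unfold partitionValue
  rw [← hT]
  apply Nat.add_le_add_left
  -- middle terms
  have hmid : ∑ p ∈ T, ((if p.1 = q then W else 0) * B p.2 + B p.1 * (if p.2 = q then W else 0))
      = W * ∑ p ∈ Finset.univ.filter (fun p : Fin s => p ≠ q), B p := by
    rw [Finset.sum_add_distrib]
    have e1 : ∑ p ∈ T, (if p.1 = q then W else 0) * B p.2
        = W * ∑ p ∈ Finset.univ.filter (fun p : Fin s => q < p), B p := by
      rw [hT, Finset.sum_filter, Fintype.sum_prod_type, Finset.mul_sum, Finset.sum_filter]
      rw [Finset.sum_comm]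
      apply Finset.sum_congr rfl
      intro p2 _
      rw [show (∑ p1 : Fin s, if p1 < p2 then (if p1 = q then W else 0) * B p2 else 0)
          = ∑ p1 : Fin s, if p1 = q then (if q < p2 then W * B p2 else 0) else 0 from
        Finset.sum_congr rfl (fun p1 _ => by
          by_cases h1 : p1 = q <;> by_cases h2 : p1 < p2 <;>
            simp [h1, h2] <;> first | omega | (subst h1; simp [h2])),
        Finset.sum_ite_eq' Finset.univ q]
      simp
    have e2 : ∑ p ∈ T, B p.1 * (if p.2 = q then W else 0)
        = W * ∑ p ∈ Finset.univ.filter (fun p : Fin s => p < q), B p := by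
      rw [hT, Finset.sum_filter, Fintype.sum_prod_type, Finset.mul_sum, Finset.sum_filter]
      apply Finset.sum_congr rfl
      intro p1 _
      rw [show (∑ p2 : Fin s, if p1 < p2 then B p1 * (if p2 = q then W else 0) else 0)
          = ∑ p2 : Fin s, if p2 = q then (if p1 < q then W * B p1 else 0) else 0 from
        Finset.sum_congr rfl (fun p2 _ => by
          by_cases h1 : p2 = q <;> by_cases h2 : p1 < p2 <;>
            simp [h1, h2] <;> first | ring | omega | (subst h1; simp [h2] <;> ring)),
        Finset.sum_ite_eq' Finset.univ q]
      simp
    rw [e1, e2, ← Nat.mul_add]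
    congr 1
    rw [← Finset.sum_filter_add_sum_filter_not
      (Finset.univ.filter (fun p : Fin s => p ≠ q)) (fun p => q < p) B]
    rw [Finset.filter_filter, Finset.filter_filter]
    congr 1
    · apply Finset.sum_congr _ (fun _ _ => rfl)
      ext p
      simp only [Finset.mem_filter, Finset.mem_univ, true_and]
      constructor
      · intro h; exact ⟨Fin.ne_of_gt h, h⟩
      · rintro ⟨_, h⟩; exact h
    · apply Finset.sum_congr _ (fun _ _ => rfl)
      ext p
      simp only [Finset.mem_filter, Finset.mem_univ, true_and]
      constructor
      · intro h
        exact ⟨h.ne, by omega⟩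
      · rintro ⟨h1, h2⟩
        have := Fin.lt_or_lt_of_ne h1
        omega
  rw [hmid]
  apply Nat.mul_le_mul_left
  -- sum over parts ≠ q of B equals sum over i with P i ≠ q
  apply le_of_eq
  rw [Finset.sum_fiberwise_eq_sum_filter Finset.univ
    (Finset.univ.filter (fun p : Fin s => p ≠ q)) P n']
  apply Finset.sum_congr _ (fun _ _ => rfl)
  ext i
  simp

lemma card_filter_lt (m k : ℕ) : (Finset.univ.filter (fun i : Fin m => i.val < k)).card ≤ k := by
  have := Finset.card_le_card_of_injOn (f := Fin.val)
    (s := Finset.univ.filter (fun i : Fin m => i.val < k)) (t := Finset.range k)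
    (by intro i hi; simp only [Finset.mem_coe, Finset.mem_filter] at hi; simpa using hi.2)
    (fun a _ b _ h => Fin.val_injective h)
  simpa using this

/-- `f(n₁,…,n_r,1,t) ≥ f(n₁,…,n_{b-1},1,t) + (∑_{i=b}^r n_i)(∑_{i=1}^{t-2} n_i)`
for any `t ≤ b ≤ r`.  (Classes are `1`-indexed in the paper; here index `i : Fin r`
corresponds to class `i+1`.) -/
theorem stmt5 (r t b : ℕ) (ht : 3 ≤ t) (hr : t ≤ r) (hb1 : t ≤ b) (hb2 : b ≤ r)
    (n : Fin r → ℕ) (hpos : ∀ i, 0 < n i) (hmono : Antitone n) :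
    fval (b - 1) t (fun i => n ⟨i.val, lt_of_lt_of_le i.isLt (by omega)⟩) +
      (∑ i ∈ Finset.univ.filter (fun i : Fin r => b - 1 ≤ i.val), n i) *
      (∑ i ∈ Finset.univ.filter (fun i : Fin r => i.val < t - 2), n i)
      ≤ fval r t n := by
  have hm : b - 1 ≤ r := by omega
  set n' : Fin (b - 1) → ℕ :=
    (fun i => n ⟨i.val, lt_of_lt_of_le i.isLt (by omega : b - 1 ≤ r)⟩) with hn'
  -- the sup is attained
  have hne : (Finset.univ.filter
      (fun P : Fin (b - 1) → Fin (t - 1) => Function.Surjective P)).Nonempty := by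
    refine ⟨fun i => ⟨min i.val (t - 2), by omega⟩, ?_⟩
    simp only [Finset.mem_filter, Finset.mem_univ, true_and]
    intro p
    refine ⟨⟨p.val, by omega⟩, ?_⟩
    have : p.val ≤ t - 2 := by omega
    ext
    simp [Nat.min_eq_left this]
  obtain ⟨P, hPmem, hPsup⟩ := Finset.exists_mem_eq_sup _ hne (partitionValue n')
  have hPsurj : Function.Surjective P := (Finset.mem_filter.mp hPmem).2
  -- pigeonhole: choose q avoiding the parts of the t-2 heaviest classes
  set S := (Finset.univ.filter (fun i : Fin (b - 1) => i.val < t - 2)).image P with hS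
  have hq : ∃ q : Fin (t - 1), q ∉ S := by
    by_contra hcon
    push_neg at hcon
    have huniv : S = Finset.univ := Finset.eq_univ_iff_forall.mpr hcon
    have h1 : S.card ≤ t - 2 :=
      le_trans (Finset.card_image_le) (card_filter_lt _ _)
    rw [huniv] at h1
    simp only [Finset.card_univ, Fintype.card_fin] at h1
    omega
  obtain ⟨q, hqS⟩ := hq
  -- the extended partition
  set Q : Fin r → Fin (t - 1) :=
    fun i : Fin r => if h : i.val < b - 1 then P ⟨i.val, h⟩ else q with hQdef
  have hQsurj : Function.Surjective Q := by
    intro p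
    obtain ⟨i, hi⟩ := hPsurj p
    refine ⟨⟨i.val, lt_of_lt_of_le i.isLt hm⟩, ?_⟩
    simp only [hQdef, dif_pos i.isLt, Fin.eta]
    exact hi
  have hQle : partitionValue n Q ≤ fval r t n :=
    Finset.le_sup (by simp [hQsurj])
  refine le_trans ?_ (le_trans (key_ext hm n P q) hQle)
  rw [hn'] at hPsup
  rw [show fval (b - 1) t (fun i => n ⟨i.val, lt_of_lt_of_le i.isLt (by omega)⟩)
      = partitionValue n' P from hPsup]
  apply Nat.add_le_add_left
  apply Nat.mul_le_mul_left
  rw [sum_low hm (by omega : t - 2 ≤ b - 1) n]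
  apply Finset.sum_le_sum_of_subset
  intro i hi
  simp only [Finset.mem_filter, Finset.mem_univ, true_and] at hi ⊢
  intro hPi
  exact hqS (by rw [← hPi]; exact Finset.mem_image_of_mem P (by simp [hi]))
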